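/- Let M be a real m×n matrix, let X be a real m×l matrix of full rank l, and let F be a real k×m matrix with m ≥ k ≥ l such that FX has full rank l. Set Y = (FX)^+FM and W = I_m − X(FX)^+F. Then M − XY = W(M − XX^+M); consequently ||M − XY|| ≤ ||W||·||M − XX^+M|| and ||W|| ≤ ||I_m|| + ||X||·||F||·||(FX)^+||, where ||·|| denotes either the spectral norm or the Frobenius norm (all inequalities hold for both norms). -/

import Mathlib

open Matrix MeasureTheory ProbabilityTheory Real
open scoped BigOperators ENNReal

noncomputable section

namespace LRA

theorem _root_.Matrix.isHermitian_transpose_mul_self {m n : Type*} [Fintype m]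
    (A : Matrix m n ℝ) : (Aᵀ * A).IsHermitian := by
  simpa [conjTranspose_eq_transpose_of_trivial] using Matrix.isHermitian_conjTranspose_mul_self A

/-- The `j`-th largest singular value (1-indexed) of a real `m × n` matrix;
by convention it is `0` for `j = 0` or `j > n`. -/
noncomputable def sval {m n : ℕ} (A : Matrix (Fin m) (Fin n) ℝ) (j : ℕ) : ℝ :=
  if hj : 1 ≤ j ∧ j ≤ n then
    Real.sqrt ((Matrix.isHermitian_transpose_mul_self A).eigenvalues
      (Tuple.sort (Matrix.isHermitian_transpose_mul_self A).eigenvalues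
        (Fin.rev ⟨j - 1, by omega⟩)))
  else 0

/-- Spectral norm: the largest singular value. -/
noncomputable def specNorm {m n : ℕ} (A : Matrix (Fin m) (Fin n) ℝ) : ℝ := sval A 1

/-- Frobenius norm. -/
noncomputable def frobNorm {m n : ℕ} (A : Matrix (Fin m) (Fin n) ℝ) : ℝ :=
  Real.sqrt (∑ i, ∑ j, (A i j) ^ 2)

/-- The optimal Frobenius rank-`r` approximation error `(∑_{j>r} σ_j(A)²)^{1/2}`. -/
noncomputable def frobTail {m n : ℕ} (A : Matrix (Fin m) (Fin n) ℝ) (r : ℕ) : ℝ :=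
  Real.sqrt (∑ j ∈ Finset.Ioc r n, sval A j ^ 2)

/-- The four Penrose conditions. -/
def IsMoorePenrose {m n : ℕ} (A : Matrix (Fin m) (Fin n) ℝ)
    (B : Matrix (Fin n) (Fin m) ℝ) : Prop :=
  A * B * A = A ∧ B * A * B = B ∧ (A * B)ᵀ = A * B ∧ (B * A)ᵀ = B * A

open scoped Classical in
/-- The Moore–Penrose pseudoinverse. -/
noncomputable def pinv {m n : ℕ} (A : Matrix (Fin m) (Fin n) ℝ) :
    Matrix (Fin n) (Fin m) ℝ :=
  if h : ∃ B, IsMoorePenrose A B then h.choose else 0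

/-- The `r`-projective volume `∏_{j=1}^r σ_j(A)`. -/
noncomputable def pvol {m n : ℕ} (r : ℕ) (A : Matrix (Fin m) (Fin n) ℝ) : ℝ :=
  ∏ j ∈ Finset.Icc 1 r, sval A j

instance matrixMeasurableSpace {p q : ℕ} : MeasurableSpace (Matrix (Fin p) (Fin q) ℝ) :=
  MeasurableSpace.pi

/-- A random matrix all of whose entries are i.i.d. standard normal random variables. -/
def IsGaussianMatrix {Ω : Type*} [MeasurableSpace Ω] (μ : Measure Ω) {p q : ℕ}
    (G : Ω → Matrix (Fin p) (Fin q) ℝ) : Prop :=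
  Measurable G ∧
  @iIndepFun Ω (Fin p × Fin q) _ (fun _ => ℝ) (fun _ : Fin p × Fin q => (inferInstance : MeasurableSpace ℝ))
    (fun ij ω => G ω ij.1 ij.2) μ ∧
  ∀ i j, Measure.map (fun ω => G ω i j) μ = gaussianReal 0 1

/-- The `k × l` submatrix of `W` with rows indexed by `I` and columns by `J`. -/
noncomputable def subm {m n k l : ℕ} (W : Matrix (Fin m) (Fin n) ℝ)
    {I : Finset (Fin m)} {J : Finset (Fin n)} (hI : I.card = k) (hJ : J.card = l) :
    Matrix (Fin k) (Fin l) ℝ :=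
  W.submatrix (fun i => ((I.orderIsoOfFin hI i : I) : Fin m))
    (fun j => ((J.orderIsoOfFin hJ j : J) : Fin n))

-- ===== auxiliary lemmas =====

lemma mulVec_eq_zero {m l : ℕ} (A : Matrix (Fin m) (Fin l) ℝ) (h : A.rank = l) :
    ∀ v, A *ᵥ v = 0 → v = 0 := by
  intro v hv
  have hker : LinearMap.ker A.mulVecLin = ⊥ := by
    have h1 := A.mulVecLin.finrank_range_add_finrank_ker
    rw [show Module.finrank ℝ (Fin l → ℝ) = l by simp] at h1
    have h2 : Module.finrank ℝ (LinearMap.range A.mulVecLin) = l := h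
    have : Module.finrank ℝ (LinearMap.ker A.mulVecLin) = 0 := by omega
    exact Submodule.finrank_eq_zero.mp this
  have : v ∈ LinearMap.ker A.mulVecLin := hv
  simpa [hker] using this

lemma mul_cancel {m l p : ℕ} (A : Matrix (Fin m) (Fin l) ℝ) (h : A.rank = l)
    {C D : Matrix (Fin l) (Fin p) ℝ} (hCD : A * C = A * D) : C = D := by
  have hz : A * (C - D) = 0 := by rw [Matrix.mul_sub, hCD, sub_self]
  have : C - D = 0 := by
    ext i j
    have hcol : A *ᵥ (fun x => (C - D) x j) = 0 := by
      funext i'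
      have := congrFun (congrFun hz i') j
      simpa [Matrix.mul_apply, Matrix.mulVec, dotProduct] using this
    have := congrFun (mulVec_eq_zero A h _ hcol) i
    simpa using this
  simpa [sub_eq_zero] using this

lemma exists_mp {m l : ℕ} (A : Matrix (Fin m) (Fin l) ℝ) (h : A.rank = l) :
    ∃ B, IsMoorePenrose A B := by
  set S := Aᵀ * A with hSdef
  have hSherm : Sᵀ = S := by
    rw [hSdef, Matrix.transpose_mul, Matrix.transpose_transpose]
  have hSker : ∀ v, S *ᵥ v = 0 → v = 0 := by
    intro v hv
    apply mulVec_eq_zero A h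
    have : v ∈ LinearMap.ker S.mulVecLin := hv
    rw [Matrix.ker_mulVecLin_transpose_mul_self] at this
    exact this
  have hdet : IsUnit S.det := by
    rw [isUnit_iff_ne_zero]
    intro hd
    obtain ⟨v, hv0, hv⟩ := (Matrix.exists_mulVec_eq_zero_iff).mpr hd
    exact hv0 (hSker v hv)
  have hinv : S⁻¹ * S = 1 := Matrix.nonsing_inv_mul S hdet
  have hBA : (S⁻¹ * Aᵀ) * A = 1 := by rw [Matrix.mul_assoc, ← hSdef, hinv]
  refine ⟨S⁻¹ * Aᵀ, ?_, ?_, ?_, ?_⟩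
  · rw [Matrix.mul_assoc A _ A, hBA, Matrix.mul_one]
  · rw [hBA, Matrix.one_mul]
  · have hSt : (S⁻¹)ᵀ = S⁻¹ := by rw [Matrix.transpose_nonsing_inv, hSherm]
    rw [← Matrix.mul_assoc, Matrix.transpose_mul, Matrix.transpose_mul, hSt,
      Matrix.transpose_transpose, Matrix.mul_assoc]
  · rw [hBA]; simp

lemma pinv_mul {m l : ℕ} (A : Matrix (Fin m) (Fin l) ℝ) (h : A.rank = l) :
    pinv A * A = 1 := by
  have hex : ∃ B, IsMoorePenrose A B := exists_mp A h
  rw [pinv, dif_pos hex]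
  obtain ⟨h1, -, -, -⟩ := hex.choose_spec
  apply mul_cancel A h
  rw [Matrix.mul_one, ← Matrix.mul_assoc, h1]

section Spec
open scoped Matrix.Norms.L2Operator

lemma inner_euc {p : ℕ} (x y : EuclideanSpace ℝ (Fin p)) :
    (inner ℝ x y : ℝ) = ∑ i, x i * y i := by
  simp [PiLp.inner_apply, RCLike.inner_apply, mul_comm]

lemma quad_form {m n : ℕ} (A : Matrix (Fin m) (Fin n) ℝ) (v : EuclideanSpace ℝ (Fin n)) :
    ‖Matrix.toEuclideanLin A v‖ ^ 2 =
      ∑ i, (Matrix.isHermitian_transpose_mul_self A).eigenvalues i *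
        ((Matrix.isHermitian_transpose_mul_self A).eigenvectorBasis.repr v i) ^ 2 := by
  set hS := Matrix.isHermitian_transpose_mul_self A
  set e := hS.eigenvectorBasis with he
  set ev := hS.eigenvalues with hev
  have hTe : ∀ i, Matrix.toEuclideanLin (Aᴴ * A) (e i) = ev i • (e i) := by
    intro i
    have h1 := hS.mulVec_eigenvectorBasis i
    apply PiLp.ext
    intro j
    have := congrFun h1 j
    simpa [Matrix.toEuclideanLin_apply] using this
  have step1 : ‖Matrix.toEuclideanLin A v‖ ^ 2
      = (inner ℝ v (Matrix.toEuclideanLin (Aᴴ * A) v) : ℝ) := by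
    rw [← real_inner_self_eq_norm_sq]
    rw [inner_euc, inner_euc]
    have hAH : Aᴴ = Aᵀ := rfl
    have hdot : (A *ᵥ v) ⬝ᵥ (A *ᵥ v) = v ⬝ᵥ ((Aᴴ * A) *ᵥ v) := by
      rw [← Matrix.mulVec_mulVec, Matrix.dotProduct_mulVec v, hAH, Matrix.vecMul_transpose]
    simpa [Matrix.toEuclideanLin_apply, dotProduct] using hdot
  rw [step1]
  conv_lhs => rw [← e.sum_repr v]
  rw [map_sum, inner_sum]
  refine Finset.sum_congr rfl fun i _ => ?_
  rw [_root_.map_smul, hTe i, smul_smul, real_inner_smul_right, e.sum_repr]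
  have hrepr : (inner ℝ v (e i) : ℝ) = e.repr v i := by
    rw [real_inner_comm, ← OrthonormalBasis.repr_apply_apply]
  rw [hrepr]
  ring

lemma repr_norm {n : ℕ} (e : OrthonormalBasis (Fin n) ℝ (EuclideanSpace ℝ (Fin n)))
    (v : EuclideanSpace ℝ (Fin n)) : ∑ i, (e.repr v i) ^ 2 = ‖v‖ ^ 2 := by
  have h1 : ∑ i, (e.repr v i) ^ 2 = (inner ℝ (e.repr v) (e.repr v) : ℝ) := by
    rw [inner_euc]
    exact Finset.sum_congr rfl fun i _ => sq (e.repr v i)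
  rw [h1, real_inner_self_eq_norm_sq, LinearIsometryEquiv.norm_map]

lemma specNorm_eq_l2 {m n : ℕ} (A : Matrix (Fin m) (Fin n) ℝ) : specNorm A = ‖A‖ := by
  rcases Nat.eq_zero_or_pos n with hn | hn
  · subst hn
    have hA : A = 0 := by ext i j; exact j.elim0
    rw [specNorm, sval, dif_neg (by omega), hA, norm_zero]
  · set hS := Matrix.isHermitian_transpose_mul_self A with hhS
    set e := hS.eigenvectorBasis with he
    set ev := hS.eigenvalues with hev
    set j₀ : Fin n := Tuple.sort ev (Fin.rev ⟨0, by omega⟩) with hj₀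
    set μ := ev j₀ with hμ
    have hmax : ∀ i, ev i ≤ μ := by
      intro i
      have hi : i = Tuple.sort ev ((Tuple.sort ev).symm i) := (Equiv.apply_symm_apply _ _).symm
      rw [hμ, hj₀, hi]
      have hle : ((Tuple.sort ev).symm i) ≤ Fin.rev ⟨0, by omega⟩ := by
        rw [Fin.le_def, Fin.val_rev]
        have h0 : (⟨0, by omega⟩ : Fin n).val = 0 := rfl
        have h1 := ((Tuple.sort ev).symm i).isLt
        omega
      exact Tuple.monotone_sort ev hle
    set T := (Matrix.toEuclideanLin (𝕜 := ℝ) (m := Fin m) (n := Fin n)).trans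
      LinearMap.toContinuousLinearMap A with hT
    have hTapp : ∀ v, T v = Matrix.toEuclideanLin A v := fun v => rfl
    have hv₀ : ‖T (e j₀)‖ ^ 2 = μ := by
      rw [hTapp, quad_form]
      rw [show (Matrix.isHermitian_transpose_mul_self A).eigenvectorBasis = e from rfl]
      have : ∀ i, e.repr (e j₀) i = if i = j₀ then 1 else 0 := by
        intro i
        rw [e.repr_self]
        rw [EuclideanSpace.single_apply]
      rw [Finset.sum_eq_single j₀]
      · rw [this j₀, if_pos rfl]; simp [hμ, hev, hhS]
      · intro b _ hb
        rw [this b, if_neg hb]; ring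
      · intro h; exact absurd (Finset.mem_univ _) h
    have hμ0 : 0 ≤ μ := by rw [← hv₀]; positivity
    have hbound : ∀ v, ‖T v‖ ≤ Real.sqrt μ * ‖v‖ := by
      intro v
      have h1 : ‖T v‖ ^ 2 ≤ μ * ‖v‖ ^ 2 := by
        rw [hTapp, quad_form, ← repr_norm
          (Matrix.isHermitian_transpose_mul_self A).eigenvectorBasis v, Finset.mul_sum]
        apply Finset.sum_le_sum
        intro i _
        have := hmax i
        nlinarith [sq_nonneg ((Matrix.isHermitian_transpose_mul_self A).eigenvectorBasis.repr v i)]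
      have h2 : ‖T v‖ = Real.sqrt (‖T v‖ ^ 2) := (Real.sqrt_sq (norm_nonneg _)).symm
      rw [h2]
      calc Real.sqrt (‖T v‖ ^ 2) ≤ Real.sqrt (μ * ‖v‖ ^ 2) := Real.sqrt_le_sqrt h1
        _ = Real.sqrt μ * ‖v‖ := by
            rw [Real.sqrt_mul hμ0, Real.sqrt_sq (norm_nonneg _)]
    have hnorm : ‖A‖ = Real.sqrt μ := by
      refine le_antisymm ?_ ?_
      · exact ContinuousLinearMap.opNorm_le_bound _ (Real.sqrt_nonneg _) hbound
      · have h1 := T.le_opNorm (e j₀)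
        have h2 : ‖(e j₀ : EuclideanSpace ℝ (Fin n))‖ = 1 := e.orthonormal.1 j₀
        have h3 : ‖T (e j₀)‖ = Real.sqrt μ := by
          rw [← hv₀, Real.sqrt_sq (norm_nonneg _)]
        rw [h3, h2, mul_one] at h1
        exact h1
    rw [hnorm, specNorm, sval, dif_pos ⟨le_refl 1, hn⟩]

lemma specNorm_nonneg {m n : ℕ} (A : Matrix (Fin m) (Fin n) ℝ) : 0 ≤ specNorm A := by
  rw [specNorm_eq_l2]; exact norm_nonneg _

lemma specNorm_mul_le {m n p : ℕ} (A : Matrix (Fin m) (Fin n) ℝ)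
    (B : Matrix (Fin n) (Fin p) ℝ) : specNorm (A * B) ≤ specNorm A * specNorm B := by
  simp only [specNorm_eq_l2]; exact Matrix.l2_opNorm_mul A B

lemma specNorm_sub_le {m n : ℕ} (A B : Matrix (Fin m) (Fin n) ℝ) :
    specNorm (A - B) ≤ specNorm A + specNorm B := by
  simp only [specNorm_eq_l2]; exact norm_sub_le A B

end Spec

section Frob

attribute [local instance] Matrix.frobeniusNormedAddCommGroup

lemma frobNorm_eq {m n : ℕ} (A : Matrix (Fin m) (Fin n) ℝ) : frobNorm A = ‖A‖ := by
  rw [frobNorm, Matrix.frobenius_norm_def, Real.sqrt_eq_rpow]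
  congr 1
  refine Finset.sum_congr rfl fun i _ => Finset.sum_congr rfl fun j _ => ?_
  rw [Real.rpow_two, Real.norm_eq_abs, sq_abs]

lemma frobNorm_nonneg {m n : ℕ} (A : Matrix (Fin m) (Fin n) ℝ) : 0 ≤ frobNorm A := by
  rw [frobNorm_eq]; exact norm_nonneg _

lemma frobNorm_mul_le {m n p : ℕ} (A : Matrix (Fin m) (Fin n) ℝ)
    (B : Matrix (Fin n) (Fin p) ℝ) : frobNorm (A * B) ≤ frobNorm A * frobNorm B := by
  simp only [frobNorm_eq]; exact Matrix.frobenius_norm_mul A B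

lemma frobNorm_sub_le {m n : ℕ} (A B : Matrix (Fin m) (Fin n) ℝ) :
    frobNorm (A - B) ≤ frobNorm A + frobNorm B := by
  simp only [frobNorm_eq]; exact norm_sub_le A B

end Frob
-- ===== end auxiliary lemmas =====

theorem premultiplication_impact {k l m n : ℕ} (hkm : k ≤ m) (hlk : l ≤ k)
    (M : Matrix (Fin m) (Fin n) ℝ) (X : Matrix (Fin m) (Fin l) ℝ)
    (F : Matrix (Fin k) (Fin m) ℝ)
    (hX : X.rank = l) (hFX : (F * X).rank = l)
    (Y : Matrix (Fin l) (Fin n) ℝ) (hY : Y = pinv (F * X) * F * M)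
    (W : Matrix (Fin m) (Fin m) ℝ) (hW : W = 1 - X * pinv (F * X) * F) :
    M - X * Y = W * (M - X * pinv X * M) ∧
    specNorm (M - X * Y) ≤ specNorm W * specNorm (M - X * pinv X * M) ∧
    frobNorm (M - X * Y) ≤ frobNorm W * frobNorm (M - X * pinv X * M) ∧
    specNorm W ≤ specNorm (1 : Matrix (Fin m) (Fin m) ℝ) +
        specNorm X * specNorm F * specNorm (pinv (F * X)) ∧
    frobNorm W ≤ frobNorm (1 : Matrix (Fin m) (Fin m) ℝ) +
        frobNorm X * frobNorm F * frobNorm (pinv (F * X)) := by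
  have hP : pinv (F * X) * (F * X) = 1 := pinv_mul (F * X) hFX
  have h1 : X * pinv (F * X) * F * X = X := by
    rw [Matrix.mul_assoc (X * pinv (F * X)) F X,
      Matrix.mul_assoc X (pinv (F * X)) (F * X), hP, Matrix.mul_one]
  have hXY : X * Y = X * pinv (F * X) * F * M := by
    rw [hY, ← Matrix.mul_assoc, ← Matrix.mul_assoc]
  have hEq : M - X * Y = W * (M - X * pinv X * M) := by
    have hRQ : X * pinv (F * X) * F * (X * pinv X * M) = X * pinv X * M := by
      calc X * pinv (F * X) * F * (X * pinv X * M)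
          = X * pinv (F * X) * F * (X * (pinv X * M)) := by
            rw [Matrix.mul_assoc X (pinv X) M]
        _ = X * pinv (F * X) * F * X * (pinv X * M) := by
            rw [Matrix.mul_assoc (X * pinv (F * X) * F) X (pinv X * M)]
        _ = X * (pinv X * M) := by rw [h1]
        _ = X * pinv X * M := by rw [Matrix.mul_assoc X (pinv X) M]
    rw [hW, hXY, Matrix.sub_mul, Matrix.one_mul, Matrix.mul_sub, hRQ]
    abel
  have htriple_s : specNorm (X * pinv (F * X) * F)
      ≤ specNorm X * specNorm F * specNorm (pinv (F * X)) := by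
    calc specNorm (X * pinv (F * X) * F)
        ≤ specNorm (X * pinv (F * X)) * specNorm F := specNorm_mul_le _ _
      _ ≤ specNorm X * specNorm (pinv (F * X)) * specNorm F :=
          mul_le_mul_of_nonneg_right (specNorm_mul_le _ _) (specNorm_nonneg _)
      _ = specNorm X * specNorm F * specNorm (pinv (F * X)) := by ring
  have htriple_f : frobNorm (X * pinv (F * X) * F)
      ≤ frobNorm X * frobNorm F * frobNorm (pinv (F * X)) := by
    calc frobNorm (X * pinv (F * X) * F)
        ≤ frobNorm (X * pinv (F * X)) * frobNorm F := frobNorm_mul_le _ _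
      _ ≤ frobNorm X * frobNorm (pinv (F * X)) * frobNorm F :=
          mul_le_mul_of_nonneg_right (frobNorm_mul_le _ _) (frobNorm_nonneg _)
      _ = frobNorm X * frobNorm F * frobNorm (pinv (F * X)) := by ring
  refine ⟨hEq, ?_, ?_, ?_, ?_⟩
  · rw [hEq]; exact specNorm_mul_le _ _
  · rw [hEq]; exact frobNorm_mul_le _ _
  · rw [hW]
    calc specNorm (1 - X * pinv (F * X) * F)
        ≤ specNorm (1 : Matrix (Fin m) (Fin m) ℝ) + specNorm (X * pinv (F * X) * F) :=
          specNorm_sub_le _ _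
      _ ≤ specNorm (1 : Matrix (Fin m) (Fin m) ℝ) +
            specNorm X * specNorm F * specNorm (pinv (F * X)) :=
          add_le_add_right htriple_s _
  · rw [hW]
    calc frobNorm (1 - X * pinv (F * X) * F)
        ≤ frobNorm (1 : Matrix (Fin m) (Fin m) ℝ) + frobNorm (X * pinv (F * X) * F) :=
          frobNorm_sub_le _ _
      _ ≤ frobNorm (1 : Matrix (Fin m) (Fin m) ℝ) +
            frobNorm X * frobNorm F * frobNorm (pinv (F * X)) :=
          add_le_add_right htriple_f _


end LRA
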